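/- Let σ_i ∈ S_n denote the transposition of i and i+1, and for a list (j_1,…,j_N) of indices in {1,…,n−1} set w_{(k)} := σ_{j_1}∘σ_{j_2}∘⋯∘σ_{j_k} for 0 ≤ k ≤ N (composition of functions, the rightmost factor applied first; w_{(0)} = id). (1) For the list i_0: for all 0 ≤ k ≤ N and 1 ≤ b ≤ n, the image set w_{(k)}({1,…,b}) is a set of consecutive integers. (2) For the list (i'_0)^{op} obtained by reversing i'_0: for all 0 ≤ k ≤ N and 1 ≤ b ≤ n, the image set w_{(k)}({1,…,b}) is of the form {1,…,a}, or {c,…,n}, or {1,…,a} ∪ {c,…,n} with a+1 < c. -/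

import Mathlib

/-- The reduced expression `i₀ = (1,2,…,n-1, 1,2,…,n-2, …, 1,2, 1)` for `w₀`. -/
def i0List (n : ℕ) : List ℕ :=
  ((List.range (n - 1)).map fun j => List.range' 1 (n - 1 - j)).foldr (· ++ ·) []

/-- The reduced expression `i₀' = (n-1,…,1, n-1,…,2, …, n-1,n-2, n-1)` for `w₀`. -/
def i0'List (n : ℕ) : List ℕ :=
  ((List.range (n - 1)).map fun j => (List.range' (1 + j) (n - 1 - j)).reverse).foldr (· ++ ·) []

/-- The adjacent transposition `σ_i` (swapping `i` and `i+1`), as a function on `ℕ`. -/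
def sigmaFun (i : ℕ) : ℕ → ℕ := fun k => if k = i then i + 1 else if k = i + 1 then i else k

/-- `σ_{j_1} ∘ σ_{j_2} ∘ ⋯ ∘ σ_{j_k}` (rightmost factor applied first). -/
def wordPerm (l : List ℕ) : ℕ → ℕ := l.foldr (fun i f => sigmaFun i ∘ f) id

lemma wordPerm_nil : wordPerm [] = id := rfl

lemma wordPerm_cons (i : ℕ) (l : List ℕ) : wordPerm (i :: l) = sigmaFun i ∘ wordPerm l := rfl

lemma wordPerm_append (l1 l2 : List ℕ) :
    wordPerm (l1 ++ l2) = wordPerm l1 ∘ wordPerm l2 := by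
  induction l1 with
  | nil => rfl
  | cons i l ih => simp [wordPerm_cons, List.cons_append, ih, Function.comp_assoc]

lemma sigmaFun_inj (i : ℕ) : Function.Injective (sigmaFun i) := by
  intro a b
  simp only [sigmaFun]
  split_ifs <;> omega

lemma wordPerm_inj (l : List ℕ) : Function.Injective (wordPerm l) := by
  induction l with
  | nil => exact fun a b h => h
  | cons i l ih => exact fun a b h => ih (sigmaFun_inj i h)

lemma wordPerm_maps (l : List ℕ) (b : ℕ) (h : ∀ i ∈ l, 1 ≤ i ∧ i + 1 ≤ b) :
    ∀ x, 1 ≤ x → x ≤ b → 1 ≤ wordPerm l x ∧ wordPerm l x ≤ b := by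
  induction l with
  | nil => exact fun x h1 h2 => ⟨h1, h2⟩
  | cons i l ih =>
    intro x h1 h2
    have hi := h i (by simp)
    have hx := ih (fun j hj => h j (by simp [hj])) x h1 h2
    rw [wordPerm_cons]
    simp only [Function.comp_apply, sigmaFun]
    split_ifs <;> constructor <;> omega

lemma wordPerm_zero (l : List ℕ) (h : ∀ i ∈ l, 1 ≤ i) : wordPerm l 0 = 0 := by
  induction l with
  | nil => rfl
  | cons i l ih =>
    have hi := h i (by simp)
    rw [wordPerm_cons]
    simp only [Function.comp_apply, ih (fun j hj => h j (by simp [hj])), sigmaFun]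
    split_ifs with h1 h2
    · omega
    · exact h2.elim
    · rfl

lemma image_invariant (f : ℕ → ℕ) (b : ℕ) (hinj : Function.Injective f)
    (hmaps : ∀ x, 1 ≤ x → x ≤ b → 1 ≤ f x ∧ f x ≤ b) :
    Finset.image f (Finset.Icc 1 b) = Finset.Icc 1 b := by
  apply Finset.eq_of_subset_of_card_le
  · intro y hy
    simp only [Finset.mem_image, Finset.mem_Icc] at hy ⊢
    obtain ⟨x, ⟨h1, h2⟩, rfl⟩ := hy
    exact hmaps x h1 h2
  · rw [Finset.card_image_of_injective _ hinj]

lemma wordPerm_range' (r : ℕ) :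
    ∀ x, wordPerm (List.range' 1 r) x = if 1 ≤ x ∧ x ≤ r then x + 1 else if x = r + 1 then 1 else x := by
  induction r with
  | zero => intro x; simp [wordPerm_nil]; split_ifs <;> omega
  | succ r ih =>
    intro x
    have h : List.range' 1 (r + 1) = List.range' 1 r ++ [1 + 1 * r] := List.range'_concat (s := 1) (n := r)
    rw [h, wordPerm_append]
    simp only [Function.comp_apply]
    have h2 : wordPerm [1 + 1 * r] x = sigmaFun (1 + r) x := by simp [wordPerm, sigmaFun]
    rw [h2, ih]
    simp only [sigmaFun]
    split_ifs <;> omega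

lemma sigmaFun_succ (i x : ℕ) : sigmaFun (i + 1) (x + 1) = sigmaFun i x + 1 := by
  simp only [sigmaFun]; split_ifs <;> omega

lemma wordPerm_map_succ (l : List ℕ) : ∀ x, wordPerm (l.map (· + 1)) (x + 1) = wordPerm l x + 1 := by
  induction l with
  | nil => intro x; rfl
  | cons i l ih =>
    intro x
    simp only [List.map_cons, wordPerm_cons, Function.comp_apply, ih x, sigmaFun_succ]

lemma foldr_append_map (f : ℕ → ℕ) (L : List (List ℕ)) :
    ((L.map (List.map f)).foldr (· ++ ·) []) = List.map f (L.foldr (· ++ ·) []) := by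
  induction L with
  | nil => rfl
  | cons a L ih => simp [ih]

lemma i0List_one : i0List 1 = [] := rfl

lemma i0'List_one : i0'List 1 = [] := rfl

lemma i0List_succ (m : ℕ) : i0List (m + 2) = List.range' 1 (m + 1) ++ i0List (m + 1) := by
  have e1 : m + 2 - 1 = m + 1 := rfl
  have e2 : m + 1 - 1 = m := rfl
  simp only [i0List, e1, e2, List.range_succ_eq_map, List.map_cons, List.map_map,
    List.foldr_cons, Nat.sub_zero]
  congr 1
  refine congrArg _ (List.map_congr_left fun j _ => ?_)
  simp [Function.comp, Nat.succ_sub_succ]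

lemma i0'List_succ (m : ℕ) :
    i0'List (m + 2) = (List.range' 1 (m + 1)).reverse ++ (i0'List (m + 1)).map (· + 1) := by
  have e1 : m + 2 - 1 = m + 1 := rfl
  have e2 : m + 1 - 1 = m := rfl
  simp only [i0'List, e1, e2, List.range_succ_eq_map, List.map_cons, List.map_map,
    List.foldr_cons, Nat.sub_zero, Nat.add_zero, Nat.add_comm 1 0]
  congr 1
  rw [← foldr_append_map, List.map_map]
  refine congrArg _ (List.map_congr_left fun j _ => ?_)
  simp only [Function.comp_apply, Nat.succ_sub_succ]
  have h1 : ((fun x => x + 1) : ℕ → ℕ) = (fun x => 1 + x) := by funext x; omega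
  rw [h1, List.map_reverse, List.map_add_range']
  congr 2
  omega

lemma i0'List_rev (m : ℕ) :
    (i0'List (m + 2)).reverse
      = ((i0'List (m + 1)).reverse).map (· + 1) ++ List.range' 1 (m + 1) := by
  rw [i0'List_succ, List.reverse_append, List.reverse_reverse, ← List.map_reverse]

lemma i0List_mem : ∀ n, ∀ i ∈ i0List n, 1 ≤ i ∧ i + 1 ≤ n := by
  intro n
  induction n using Nat.strong_induction_on with
  | _ n ih =>
    match n with
    | 0 => intro i hi; simp [i0List] at hi
    | 1 => intro i hi; simp [i0List_one] at hi
    | (m+2) =>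
      intro i hi
      rw [i0List_succ] at hi
      rcases List.mem_append.1 hi with h | h
      · have := List.mem_range'.1 h
        omega
      · have := ih (m+1) (by omega) i h
        omega

lemma i0'List_mem : ∀ n, ∀ i ∈ i0'List n, 1 ≤ i ∧ i + 1 ≤ n := by
  intro n
  induction n using Nat.strong_induction_on with
  | _ n ih =>
    match n with
    | 0 => intro i hi; simp [i0'List] at hi
    | 1 => intro i hi; simp [i0'List_one] at hi
    | (m+2) =>
      intro i hi
      rw [i0'List_succ] at hi
      rcases List.mem_append.1 hi with h | h
      · have := List.mem_range'.1 (List.mem_reverse.1 h)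
        omega
      · obtain ⟨j, hj, rfl⟩ := List.mem_map.1 h
        have := ih (m+1) (by omega) j hj
        omega

lemma take_range' (s m k : ℕ) : (List.range' s m).take k = List.range' s (min k m) := by
  rcases le_or_gt m k with h | h
  · rw [List.take_of_length_le (by simp [List.length_range']; omega)]
    congr 1
    omega
  · have hsplit : List.range' s m = List.range' s k ++ List.range' (s + k) (m - k) := by
      have := @List.range'_append s k (m - k) 1
      simp only [one_mul] at this
      rw [this]
      congr 1
      omega
    rw [hsplit, List.take_append, List.take_of_length_le (by simp [List.length_range'])]
    simp [List.length_range']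
    congr 1
    omega

lemma image_shift (a c : ℕ) (f : ℕ → ℕ) (hf : ∀ x, a ≤ x → x ≤ c → f x = x + 1) :
    Finset.image f (Finset.Icc a c) = Finset.Icc (a + 1) (c + 1) := by
  ext x
  simp only [Finset.mem_image, Finset.mem_Icc]
  constructor
  · rintro ⟨y, ⟨h1, h2⟩, rfl⟩
    rw [hf y h1 h2]
    omega
  · intro hx
    exact ⟨x - 1, ⟨by omega, by omega⟩, by rw [hf (x-1) (by omega) (by omega)]; omega⟩

lemma image_sub (s t N : ℕ) (f : ℕ → ℕ) (hf : ∀ x, s ≤ x → x ≤ t → f x = N - x)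
    (h1 : t ≤ N) (h2 : s ≤ t) :
    Finset.image f (Finset.Icc s t) = Finset.Icc (N - t) (N - s) := by
  ext x
  simp only [Finset.mem_image, Finset.mem_Icc]
  constructor
  · rintro ⟨y, ⟨hy1, hy2⟩, rfl⟩
    rw [hf y hy1 hy2]
    omega
  · intro hx
    exact ⟨N - x, ⟨by omega, by omega⟩, by rw [hf (N-x) (by omega) (by omega)]; omega⟩

lemma image_conj (f g : ℕ → ℕ) (hfg : ∀ x, f (x + 1) = g x + 1) (b : ℕ) (hb : 1 ≤ b) :
    Finset.image f (Finset.Icc 1 b)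
      = insert (f 1) (Finset.image (fun z => z + 1) (Finset.image g (Finset.Icc 1 (b - 1)))) := by
  ext x
  simp only [Finset.mem_image, Finset.mem_insert, Finset.mem_Icc]
  constructor
  · rintro ⟨y, ⟨h1, h2⟩, rfl⟩
    rcases eq_or_lt_of_le h1 with h | h
    · left; rw [← h]
    · right
      exact ⟨g (y - 1), ⟨y - 1, ⟨by omega, by omega⟩, rfl⟩,
        by rw [← hfg]; congr 1; omega⟩
  · rintro (rfl | ⟨z, ⟨w, ⟨hw1, hw2⟩, rfl⟩, rfl⟩)
    · exact ⟨1, ⟨le_refl 1, hb⟩, rfl⟩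
    · exact ⟨w + 1, ⟨by omega, by omega⟩, hfg w⟩

lemma i0'rev_entries (n : ℕ) : ∀ i ∈ (i0'List n).reverse, 1 ≤ i :=
  fun i hi => (i0'List_mem n i (List.mem_reverse.1 hi)).1

lemma w0'_formula : ∀ n, ∀ x, 1 ≤ x → x ≤ n → wordPerm ((i0'List n).reverse) x = n + 1 - x := by
  intro n
  induction n using Nat.strong_induction_on with
  | _ n ih =>
    match n with
    | 0 => intro x h1 h2; omega
    | 1 =>
      intro x h1 h2
      have hx : x = 1 := by omega
      simp [hx, i0'List_one, wordPerm_nil]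
    | (m+2) =>
      intro x h1 h2
      rw [i0'List_rev, wordPerm_append]
      simp only [Function.comp_apply]
      rw [wordPerm_range' (m+1) x]
      rcases le_or_gt x (m+1) with h | h
      · rw [if_pos ⟨h1, h⟩, wordPerm_map_succ, ih (m+1) (by omega) x h1 h]
        omega
      · have hx : x = m + 2 := by omega
        rw [if_neg (by omega), if_pos (by omega)]
        have h0 : (1 : ℕ) = 0 + 1 := rfl
        rw [h0, wordPerm_map_succ, wordPerm_zero _ (i0'rev_entries (m+1))]
        omega

lemma P1 : ∀ n k b, 1 ≤ b → b ≤ n → ∃ a c, 1 ≤ a ∧ a ≤ c ∧ c ≤ n ∧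
    Finset.image (wordPerm ((i0List n).take k)) (Finset.Icc 1 b) = Finset.Icc a c := by
  intro n
  induction n using Nat.strong_induction_on with
  | _ n ih =>
    match n with
    | 0 => intro k b h1 h2; omega
    | 1 =>
      intro k b h1 h2
      have hb : b = 1 := by omega
      refine ⟨1, 1, le_refl 1, le_refl 1, le_refl 1, ?_⟩
      subst hb
      simp [i0List_one, wordPerm_nil]
    | (m+2) =>
      intro k b h1 h2
      rw [i0List_succ, List.take_append, take_range', List.length_range']
      rcases le_or_gt k (m+1) with hk | hk
      · -- prefix inside the first block
        rw [min_eq_left hk, Nat.sub_eq_zero_of_le hk, List.take_zero, List.append_nil]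
        rcases le_or_gt b k with hbk | hbk
        · -- b ≤ k : pure shift
          refine ⟨2, b + 1, by omega, by omega, by omega, ?_⟩
          apply image_shift
          intro x hx1 hx2
          rw [wordPerm_range' k x, if_pos ⟨hx1, by omega⟩]
        · -- b ≥ k+1 : invariant
          refine ⟨1, b, le_refl 1, h1, h2, ?_⟩
          apply image_invariant _ _ (wordPerm_inj _)
          apply wordPerm_maps
          intro i hi
          have := List.mem_range'.1 hi
          omega
      · -- the whole first block is present
        rw [min_eq_right (by omega), wordPerm_append, ← Finset.image_image]
        rcases le_or_gt b (m+1) with hbm | hbm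
        · obtain ⟨a, c, ha, hac, hc, heq⟩ := ih (m+1) (by omega) (k - (m+1)) b h1 hbm
          rw [heq]
          refine ⟨a + 1, c + 1, by omega, by omega, by omega, ?_⟩
          apply image_shift
          intro x hx1 hx2
          rw [wordPerm_range' (m+1) x, if_pos ⟨by omega, by omega⟩]
        · -- b = m+2
          have hb : b = m + 2 := by omega
          refine ⟨1, b, le_refl 1, h1, h2, ?_⟩
          rw [Finset.image_image, ← wordPerm_append]
          apply image_invariant _ _ (wordPerm_inj _)
          apply wordPerm_maps
          intro i hi
          rcases List.mem_append.1 hi with h | h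
          · have := List.mem_range'.1 h
            omega
          · have := i0List_mem (m+1) i (List.take_subset _ _ h)
            omega

lemma setid1 (t : ℕ) (h : 1 ≤ t) : insert 1 (Finset.Icc 2 t) = Finset.Icc 1 t := by
  ext x
  simp only [Finset.mem_insert, Finset.mem_Icc]
  omega

lemma setid2 (c t : ℕ) (h : 2 ≤ c) :
    insert 1 (Finset.Icc c t) = Finset.Icc 1 1 ∪ Finset.Icc c t := by
  ext x
  simp only [Finset.mem_insert, Finset.mem_Icc, Finset.mem_union]
  omega

lemma setid4 (a c t : ℕ) (h : 1 ≤ a) :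
    insert 1 (Finset.Icc 2 a ∪ Finset.Icc c t) = Finset.Icc 1 a ∪ Finset.Icc c t := by
  ext x
  simp only [Finset.mem_insert, Finset.mem_Icc, Finset.mem_union]
  omega

lemma P2 : ∀ n k b, 1 ≤ b → b ≤ n →
    (∃ a, Finset.image (wordPerm ((i0'List n).reverse.take k)) (Finset.Icc 1 b)
        = Finset.Icc 1 a) ∨
    (∃ c, 1 ≤ c ∧ Finset.image (wordPerm ((i0'List n).reverse.take k)) (Finset.Icc 1 b)
        = Finset.Icc c n) ∨
    (∃ a c, a + 1 < c ∧
      Finset.image (wordPerm ((i0'List n).reverse.take k)) (Finset.Icc 1 b)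
        = Finset.Icc 1 a ∪ Finset.Icc c n) := by
  intro n
  induction n using Nat.strong_induction_on with
  | _ n ih =>
    match n with
    | 0 => intro k b h1 h2; omega
    | 1 =>
      intro k b h1 h2
      have hb : b = 1 := by omega
      left
      refine ⟨1, ?_⟩
      subst hb
      simp [i0'List_one, wordPerm_nil]
    | (m+2) =>
      intro k b h1 h2
      rw [i0'List_rev, List.take_append, List.length_map, List.length_reverse]
      set M := (i0'List (m+1)).length with hM
      rcases le_or_gt k M with hk | hk
      · -- still inside the conjugated part
        rw [Nat.sub_eq_zero_of_le hk, List.take_zero, List.append_nil, ← List.map_take]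
        set g := wordPerm ((i0'List (m+1)).reverse.take k) with hg
        set f := wordPerm (((i0'List (m+1)).reverse.take k).map (· + 1)) with hf
        have hfg : ∀ x, f (x + 1) = g x + 1 := wordPerm_map_succ _
        have hent : ∀ i ∈ (i0'List (m+1)).reverse.take k, 1 ≤ i :=
          fun i hi => i0'rev_entries (m+1) i (List.take_subset _ _ hi)
        have hf1 : f 1 = 1 := by
          have : (1 : ℕ) = 0 + 1 := rfl
          rw [this, hfg, hg, wordPerm_zero _ hent]
        rw [image_conj f g hfg b h1, hf1]
        rcases eq_or_lt_of_le h1 with hb1 | hb1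
        · -- b = 1
          left
          refine ⟨1, ?_⟩
          rw [← hb1]
          norm_num
        · -- b ≥ 2
          rcases ih (m+1) (by omega) k (b-1) (by omega) (by omega) with ⟨a, heq⟩ | ⟨c, hc, heq⟩ | ⟨a, c, hac, heq⟩
          · rw [heq, image_shift 1 a _ (fun x _ _ => rfl), setid1 (a+1) (by omega)]
            exact Or.inl ⟨a + 1, rfl⟩
          · rw [heq, image_shift c (m+1) _ (fun x _ _ => rfl)]
            rcases eq_or_lt_of_le hc with hc1 | hc1
            · rw [← hc1, setid1 (m+2) (by omega)]
              exact Or.inl ⟨m + 2, rfl⟩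
            · rw [setid2 (c+1) (m+2) (by omega)]
              exact Or.inr (Or.inr ⟨1, c + 1, by omega, rfl⟩)
          · rw [heq, Finset.image_union, image_shift 1 a _ (fun x _ _ => rfl),
              image_shift c (m+1) _ (fun x _ _ => rfl), setid4 (a+1) (c+1) (m+2) (by omega)]
            exact Or.inr (Or.inr ⟨a + 1, c + 1, by omega, rfl⟩)
      · -- past the conjugated part : word = L ++ range' 1 r
        rw [List.take_of_length_le (by simp [hM]; omega), take_range']
        set r := min (k - M) (m + 1) with hr
        have hrm : r ≤ m + 1 := by omega
        rw [wordPerm_append, ← Finset.image_image]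
        set E := wordPerm (((i0'List (m+1)).reverse).map (· + 1)) with hE
        have hE1 : E 1 = 1 := by
          have h0 : (1 : ℕ) = 0 + 1 := rfl
          rw [hE, h0, wordPerm_map_succ, wordPerm_zero _ (i0'rev_entries (m+1))]
        have hEy : ∀ y, 2 ≤ y → y ≤ m + 2 → E y = m + 4 - y := by
          intro y hy1 hy2
          have h0 : y = (y - 1) + 1 := by omega
          rw [hE, h0, wordPerm_map_succ, w0'_formula (m+1) (y-1) (by omega) (by omega)]
          omega
        rcases le_or_gt b r with hbr | hbr
        · -- b ≤ r : shift then reverse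
          rw [image_shift 1 b _ (fun x hx1 hx2 => by
            rw [wordPerm_range' r x, if_pos ⟨hx1, by omega⟩]),
            image_sub 2 (b+1) (m+4) E (fun x hx1 hx2 => hEy x hx1 (by omega)) (by omega) (by omega)]
          refine Or.inr (Or.inl ⟨m + 4 - (b + 1), by omega, ?_⟩)
          congr 1 <;> omega
        · -- b > r : invariant then reverse
          rw [image_invariant _ b (wordPerm_inj _) (wordPerm_maps _ b (fun i hi => by
            have := List.mem_range'.1 hi; omega)) ]
          rcases eq_or_lt_of_le h1 with hb1 | hb1
          · left
            refine ⟨1, ?_⟩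
            rw [← hb1]
            simp [hE1]
          · rw [← setid1 b (by omega), Finset.image_insert, hE1,
              image_sub 2 b (m+4) E (fun x hx1 hx2 => hEy x hx1 (by omega)) (by omega) (by omega)]
            rcases eq_or_lt_of_le h2 with hb2 | hb2
            · rw [show m + 4 - b = 2 by omega, show m + 4 - 2 = m + 2 by omega,
                setid1 (m+2) (by omega)]
              exact Or.inl ⟨m + 2, rfl⟩
            · rw [show m + 4 - 2 = m + 2 by omega, setid2 (m + 4 - b) (m+2) (by omega)]
              exact Or.inr (Or.inr ⟨1, m + 4 - b, by omega, rfl⟩)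

theorem stmt6 (n : ℕ) (hn : 2 ≤ n) :
    (∀ k ≤ n * (n - 1) / 2, ∀ b, 1 ≤ b → b ≤ n → ∃ a c, a ≤ c ∧
        Finset.image (wordPerm ((i0List n).take k)) (Finset.Icc 1 b) = Finset.Icc a c) ∧
    (∀ k ≤ n * (n - 1) / 2, ∀ b, 1 ≤ b → b ≤ n →
        (∃ a, Finset.image (wordPerm ((i0'List n).reverse.take k)) (Finset.Icc 1 b)
            = Finset.Icc 1 a) ∨
        (∃ c, Finset.image (wordPerm ((i0'List n).reverse.take k)) (Finset.Icc 1 b)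
            = Finset.Icc c n) ∨
        (∃ a c, a + 1 < c ∧
          Finset.image (wordPerm ((i0'List n).reverse.take k)) (Finset.Icc 1 b)
            = Finset.Icc 1 a ∪ Finset.Icc c n)) := by
  constructor
  · intro k _ b hb1 hb2
    obtain ⟨a, c, _, hac, _, heq⟩ := P1 n k b hb1 hb2
    exact ⟨a, c, hac, heq⟩
  · intro k _ b hb1 hb2
    rcases P2 n k b hb1 hb2 with ⟨a, h⟩ | ⟨c, _, h⟩ | ⟨a, c, h1, h2⟩
    · exact Or.inl ⟨a, h⟩
    · exact Or.inr (Or.inl ⟨c, h⟩)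
    · exact Or.inr (Or.inr ⟨a, c, h1, h2⟩)
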